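/- Let A and B be two-dimensional F_q-subspaces of the algebraic closure of F_q. Then |A^{-1} ∩ B|/(q−1) ∈ {0, 1, 2, q+1}. Moreover |A^{-1} ∩ B| = q^2 − 1 holds exactly when A is a one-dimensional F_{q^2}-subspace and B = A^{-1} ∪ {0}. -/

import Mathlib

set_option linter.unusedSectionVars false
set_option linter.unusedVariables false
set_option maxHeartbeats 1000000

section P7Aux

variable {F K : Type*} [Field F] [Fintype F] [Field K]

lemma p7_arith {q : ℕ} (h2 : 2 ≤ q) :
    q - 1 ≠ q ^ 2 - 1 ∧ 2 * (q - 1) ≠ q ^ 2 - 1 ∧ (1 + q) * (q - 1) = q ^ 2 - 1 ∧ 0 ≠ q ^ 2 - 1 := by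
  obtain ⟨r, rfl⟩ := Nat.exists_eq_add_of_le h2
  obtain ⟨s, hs⟩ : ∃ s, (2 + r) ^ 2 = s := ⟨_, rfl⟩
  have h1 : s = r * r + 4 * r + 4 := by rw [← hs]; ring
  obtain ⟨t, ht⟩ : ∃ t, r * r = t := ⟨_, rfl⟩
  have hprod : (1 + (2 + r)) * (2 + r - 1) = t + 4 * r + 3 := by
    have h3 : 2 + r - 1 = 1 + r := by omega
    rw [h3, ← ht]; ring
  rw [hs, h1, ht, hprod]
  omega

lemma p7_indep2 (i : F →+* K) {α : K} (hα : α ∉ Set.range i) {u v : F}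
    (h : i u + i v * α = 0) : u = 0 ∧ v = 0 := by
  have hv : v = 0 := by
    by_contra hv
    apply hα
    refine ⟨-u / v, ?_⟩
    rw [map_div₀, map_neg]
    rw [div_eq_iff (fun h' => hv (i.injective (by simpa using h')))]
    linear_combination -h
  refine ⟨?_, hv⟩
  have : i u = 0 := by rw [hv] at h; simpa using h
  exact i.injective (by simpa using this)

lemma p7_param (i : F →+* K) {q : ℕ} (hq : Fintype.card F = q) (C : Set K) (hfin : C.Finite)
    (hcard : C.ncard = q ^ 2) (h1 : (1 : K) ∈ C)
    (hadd : ∀ x ∈ C, ∀ y ∈ C, x + y ∈ C)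
    (hsmul : ∀ t : F, ∀ x ∈ C, i t * x ∈ C) :
    ∃ α : K, α ∉ Set.range i ∧ C = {x | ∃ s t : F, x = i s + i t * α} := by
  have hq2 : 2 ≤ q := hq ▸ Fintype.one_lt_card
  have hrange : Set.range i ⊆ C := by
    rintro _ ⟨t, rfl⟩
    simpa using hsmul t 1 h1
  obtain ⟨α, hαC, hα⟩ : ∃ α ∈ C, α ∉ Set.range i := by
    by_contra h
    push_neg at h
    have hsub : C ⊆ Set.range i := h
    have h1' : C.ncard ≤ (Set.range i).ncard := Set.ncard_le_ncard hsub (Set.finite_range i)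
    rw [hcard, ← Nat.card_coe_set_eq, Nat.card_range_of_injective i.injective,
      Nat.card_eq_fintype_card, hq] at h1'
    nlinarith
  refine ⟨α, hα, ?_⟩
  set f : F × F → K := fun p => i p.1 + i p.2 * α with hf
  have hinj : Function.Injective f := by
    rintro ⟨s, t⟩ ⟨s', t'⟩ h
    simp only [hf] at h
    have h0 : i (s - s') + i (t - t') * α = 0 := by
      rw [map_sub, map_sub]; linear_combination h
    obtain ⟨h1', h2'⟩ := p7_indep2 i hα h0
    obtain rfl : s = s' := sub_eq_zero.mp h1'
    obtain rfl : t = t' := sub_eq_zero.mp h2'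
    rfl
  have hsub : Set.range f ⊆ C := by
    rintro _ ⟨⟨s, t⟩, rfl⟩
    exact hadd _ (hrange ⟨s, rfl⟩) _ (hsmul t α hαC)
  have hcr : (Set.range f).ncard = q ^ 2 := by
    rw [← Nat.card_coe_set_eq, Nat.card_range_of_injective hinj, Nat.card_prod,
      Nat.card_eq_fintype_card, hq, sq]
  have hCeq : Set.range f = C :=
    Set.eq_of_subset_of_ncard_le hsub (by rw [hcard, hcr]) hfin
  rw [← hCeq]
  ext x
  simp only [Set.mem_range, Set.mem_setOf_eq, hf, Prod.exists]
  constructor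
  · rintro ⟨s, t, rfl⟩; exact ⟨s, t, rfl⟩
  · rintro ⟨s, t, rfl⟩; exact ⟨s, t, rfl⟩

lemma p7_ncard_prod {γ δ : Type*} [Fintype γ] [Fintype δ] (s : Set γ) (t : Set δ) :
    (s ×ˢ t).ncard = s.ncard * t.ncard := by
  classical
  rw [Set.ncard_eq_toFinset_card', Set.ncard_eq_toFinset_card', Set.ncard_eq_toFinset_card',
    Set.toFinset_prod, Finset.card_product]

lemma p7_inv_mem {C : Set K} (hfin : C.Finite) (h1 : (1 : K) ∈ C)
    (hmul : ∀ x ∈ C, ∀ y ∈ C, x * y ∈ C) {z : K} (hz : z ∈ C) (hz0 : z ≠ 0) : z⁻¹ ∈ C := by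
  have hmt : Set.MapsTo (fun y => z * y) C C := fun y hy => hmul z hz y hy
  have hbij := (hfin.injOn_iff_bijOn_of_mapsTo hmt).mp (mul_right_injective₀ hz0).injOn
  obtain ⟨y, hy, hzy⟩ := hbij.surjOn h1
  have : z * y = 1 := hzy
  rw [← inv_eq_of_mul_eq_one_right this] at hy
  exact hy

lemma p7_pow {C : Set K} (hfin : C.Finite) (h1 : (1 : K) ∈ C) (h0 : (0 : K) ∈ C)
    (hmul : ∀ x ∈ C, ∀ y ∈ C, x * y ∈ C) {n : ℕ} (hn : C.ncard = n) {z : K} (hz : z ∈ C) :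
    z ^ n = z := by
  have hn1 : 1 ≤ n := by
    rw [← hn]
    exact (Set.ncard_pos hfin).mpr ⟨1, h1⟩
  rcases eq_or_ne z 0 with rfl | hz0
  · exact zero_pow (by omega)
  haveI : Finite ↥C := hfin.to_subtype
  let G : Subgroup Kˣ :=
    { carrier := {u : Kˣ | (u : K) ∈ C}
      mul_mem' := fun {a b} ha hb => by
        show ((a * b : Kˣ) : K) ∈ C
        rw [Units.val_mul]
        exact hmul _ ha _ hb
      one_mem' := by show ((1 : Kˣ) : K) ∈ C; rw [Units.val_one]; exact h1
      inv_mem' := fun {u} hu => by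
        show ((u⁻¹ : Kˣ) : K) ∈ C
        rw [Units.val_inv_eq_inv_val]
        exact p7_inv_mem hfin h1 hmul hu (Units.ne_zero u) }
  have hmemG : ∀ u : Kˣ, u ∈ G ↔ (u : K) ∈ C := fun u => Iff.rfl
  haveI : Finite G := by
    refine Finite.of_injective (fun u : G => (⟨((u : Kˣ) : K), u.2⟩ : ↥C)) ?_
    intro a b h
    exact Subtype.ext (Units.ext (congrArg Subtype.val h))
  have hGcard : Nat.card G = n - 1 := by
    have hb : Function.Bijective
        (fun g : G => (⟨((g : Kˣ) : K), g.2, fun h => Units.ne_zero _ h⟩ : ↥(C \ {0}))) := by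
      constructor
      · intro a b h
        exact Subtype.ext (Units.ext (congrArg Subtype.val h))
      · rintro ⟨x, hxC, hx0⟩
        have hx0' : x ≠ 0 := fun h => hx0 (by simpa using h)
        refine ⟨⟨Units.mk0 x hx0', ?_⟩, ?_⟩
        · show ((Units.mk0 x hx0' : Kˣ) : K) ∈ C
          rw [Units.val_mk0]; exact hxC
        · exact Subtype.ext rfl
    rw [Nat.card_eq_of_bijective _ hb, Nat.card_coe_set_eq,
      Set.ncard_diff_singleton_of_mem h0, hn]
  have huG : Units.mk0 z hz0 ∈ G := by
    show ((Units.mk0 z hz0 : Kˣ) : K) ∈ C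
    rw [Units.val_mk0]; exact hz
  have h1' : (⟨Units.mk0 z hz0, huG⟩ : G) ^ (n - 1) = 1 := by
    rw [← hGcard]; exact pow_card_eq_one'
  have hzpow : z ^ (n - 1) = 1 := by
    have := congrArg (fun g : G => ((g : Kˣ) : K)) h1'
    simpa using this
  calc z ^ n = z ^ (n - 1) * z := by
        rw [← pow_succ]; congr 1; omega
    _ = z := by rw [hzpow, one_mul]

lemma p7_roots {m : ℕ} (hm : 2 ≤ m) :
    {x : K | x ^ m = x}.Finite ∧ {x : K | x ^ m = x}.ncard ≤ m := by
  classical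
  set p : Polynomial K := Polynomial.X ^ m - Polynomial.X with hp
  have hne : ¬(1 = m) := by omega
  have hc : p.coeff m = 1 := by
    simp [hp, Polynomial.coeff_X_pow, Polynomial.coeff_X, hne]
  have hp0 : p ≠ 0 := fun h => by simp [h] at hc
  have hset : {x : K | x ^ m = x} = {x | p.IsRoot x} := by
    ext x; simp [hp, Polynomial.IsRoot, sub_eq_zero]
  have hdeg : p.natDegree ≤ m := by
    refine le_trans (Polynomial.natDegree_sub_le _ _) ?_
    simp only [Polynomial.natDegree_X_pow, Polynomial.natDegree_X]
    omega
  constructor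
  · rw [hset]; exact Polynomial.finite_setOf_isRoot hp0
  · rw [hset]
    have h2 : {x : K | p.IsRoot x} = ↑p.roots.toFinset := by
      ext x; simp [Polynomial.mem_roots, hp0]
    rw [h2, Set.ncard_coe_finset]
    exact le_trans (le_trans (Multiset.toFinset_card_le _) (Polynomial.card_roots' p)) hdeg

lemma p7_sol_tri (i : F →+* K) {α β : K} (hα : α ∉ Set.range i) (hβ : β ∉ Set.range i)
    {A' : Set K} (hA' : A' = {x | ∃ s t : F, x = i s + i t * α}) :
    {s : F | (β + i s)⁻¹ ∈ A'} = ∅ ∨ (∃ d : F, {s : F | (β + i s)⁻¹ ∈ A'} = {d}) ∨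
      ({s : F | (β + i s)⁻¹ ∈ A'} = Set.univ ∧ β ∈ A' ∧ α * α ∈ A') := by
  classical
  have hβ0 : ∀ s : F, β + i s ≠ 0 := by
    intro s h
    exact hβ ⟨-s, by rw [map_neg]; linear_combination -h⟩
  -- common ending: if (β + i s) * i u = 1 then β ∈ range i, contradiction
  have hend : ∀ s u : F, (β + i s) * i u = 1 → False := by
    intro s u he
    have hu : u ≠ 0 := by
      rintro rfl
      rw [map_zero, mul_zero] at he
      exact one_ne_zero he.symm
    apply hβ
    have h1 : β + i s = (i u)⁻¹ := eq_inv_of_mul_eq_one_left he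
    exact ⟨u⁻¹ - s, by rw [map_sub, map_inv₀]; linear_combination -h1⟩
  by_cases hβA : β ∈ {x : K | ∃ s t : F, x = i s + i t * α}
  · obtain ⟨b₀, b₁, hb⟩ := hβA
    have hb₁ : b₁ ≠ 0 := by
      rintro rfl
      exact hβ ⟨b₀, by rw [hb]; simp⟩
    by_cases hα2 : α * α ∈ {x : K | ∃ s t : F, x = i s + i t * α}
    · right; right
      have hmul : ∀ x ∈ A', ∀ y ∈ A', x * y ∈ A' := by
        rw [hA']
        rintro x ⟨s, t, rfl⟩ y ⟨s', t', rfl⟩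
        obtain ⟨p, r, hpr⟩ := hα2
        exact ⟨s * s' + t * t' * p, s * t' + t * s' + t * t' * r, by
          simp only [map_add, map_mul]
          linear_combination (i t * i t') * hpr⟩
      have h1 : (1 : K) ∈ A' := by rw [hA']; exact ⟨1, 0, by simp⟩
      have hfin : A'.Finite := by
        apply Set.Finite.subset (Set.finite_range (fun p : F × F => i p.1 + i p.2 * α))
        rw [hA']
        rintro x ⟨s, t, rfl⟩
        exact ⟨(s, t), rfl⟩
      refine ⟨?_, by rw [hA']; exact ⟨b₀, b₁, hb⟩, hA' ▸ hα2⟩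
      ext s
      simp only [Set.mem_setOf_eq, Set.mem_univ, iff_true]
      refine p7_inv_mem hfin h1 hmul ?_ (hβ0 s)
      rw [hA']
      exact ⟨b₀ + s, b₁, by rw [map_add]; linear_combination hb⟩
    · left
      ext s
      simp only [Set.mem_setOf_eq, Set.mem_empty_iff_false, iff_false]
      intro hmem
      rw [hA'] at hmem
      obtain ⟨u, v, huv⟩ := hmem
      have he : (β + i s) * (i u + i v * α) = 1 := by
        rw [← huv]; exact mul_inv_cancel₀ (hβ0 s)
      have hv : v = 0 := by
        by_contra hv
        apply hα2
        have hbv : i (b₁ * v) ≠ 0 := fun h =>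
          (mul_ne_zero hb₁ hv) (i.injective (by simpa using h))
        refine ⟨(1 - (b₀ + s) * u) / (b₁ * v), (-((b₀ + s) * v + b₁ * u)) / (b₁ * v), ?_⟩
        rw [map_div₀, map_div₀, div_mul_eq_mul_div, ← add_div, eq_div_iff hbv]
        simp only [map_mul, map_sub, map_add, map_one, map_neg]
        linear_combination he - (i u + i v * α) * hb
      rw [hv] at he
      rw [map_zero, zero_mul, add_zero] at he
      exact hend s u he
  · -- β is not in the span of 1, α
    have h3 : ∀ u v w : F, i u + i v * α + i w * β = 0 → u = 0 ∧ v = 0 ∧ w = 0 := by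
      intro u v w h
      have hw : w = 0 := by
        by_contra hw
        apply hβA
        have hiw : i w ≠ 0 := fun h' => hw (i.injective (by simpa using h'))
        refine ⟨-u / w, -v / w, ?_⟩
        rw [map_div₀, map_div₀, map_neg, map_neg, div_mul_eq_mul_div, ← add_div,
          eq_div_iff hiw]
        linear_combination h
      rw [hw] at h
      rw [map_zero, zero_mul, add_zero] at h
      have h2 := p7_indep2 i hα h
      exact ⟨h2.1, h2.2, hw⟩
    by_cases hαβ : ∃ c d e : F, α * β = i c + i d * α + i e * β
    · right; left
      obtain ⟨c, d, e, hcde⟩ := hαβ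
      have hαe : α - i e ≠ 0 := fun h => hα ⟨e, by linear_combination -h⟩
      have hβd : β - i d ≠ 0 := fun h => hβ ⟨d, by linear_combination -h⟩
      have hw : (α - i e) * (β - i d) = i (c + e * d) := by
        rw [map_add, map_mul]; linear_combination hcde
      have hw0 : c + e * d ≠ 0 := by
        intro h
        rw [h, map_zero] at hw
        rcases mul_eq_zero.mp hw with h' | h'
        · exact hαe h'
        · exact hβd h'
      have hiw : i (c + e * d) ≠ 0 := fun h => hw0 (i.injective (by simpa using h))
      refine ⟨-d, ?_⟩
      ext s
      simp only [Set.mem_setOf_eq, Set.mem_singleton_iff]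
      constructor
      · intro hmem
        rw [hA'] at hmem
        obtain ⟨u, v, huv⟩ := hmem
        have he : (β + i s) * (i u + i v * α) = 1 := by
          rw [← huv]; exact mul_inv_cancel₀ (hβ0 s)
        have hT : i (u * s + v * c - 1) + i (v * s + v * d) * α + i (u + v * e) * β = 0 := by
          simp only [map_add, map_sub, map_mul, map_one]
          linear_combination he - i v * hcde
        obtain ⟨h1', h2', h3'⟩ := h3 _ _ _ hT
        have hv : v ≠ 0 := by
          rintro rfl
          have hu : u = 0 := by simpa using h3'
          rw [hu] at h1'
          simp at h1'
        have : v * (s + d) = 0 := by linear_combination h2'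
        rcases mul_eq_zero.mp this with h' | h'
        · exact absurd h' hv
        · exact eq_neg_of_add_eq_zero_left h'
      · rintro rfl
        rw [hA']
        refine ⟨-(e * (c + e * d)⁻¹), (c + e * d)⁻¹, ?_⟩
        have hkey : (β + i (-d)) * ((α - i e) * (i (c + e * d))⁻¹) = 1 := by
          rw [map_neg, ← sub_eq_add_neg,
            show (β - i d) * ((α - i e) * (i (c + e * d))⁻¹)
              = ((α - i e) * (β - i d)) * (i (c + e * d))⁻¹ from by ring,
            hw, mul_inv_cancel₀ hiw]
        rw [inv_eq_of_mul_eq_one_right hkey]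
        simp only [map_neg, map_mul, map_inv₀]
        ring
    · left
      ext s
      simp only [Set.mem_setOf_eq, Set.mem_empty_iff_false, iff_false]
      intro hmem
      rw [hA'] at hmem
      obtain ⟨u, v, huv⟩ := hmem
      have he : (β + i s) * (i u + i v * α) = 1 := by
        rw [← huv]; exact mul_inv_cancel₀ (hβ0 s)
      have hv : v = 0 := by
        by_contra hv
        apply hαβ
        have hiv : i v ≠ 0 := fun h => hv (i.injective (by simpa using h))
        refine ⟨(1 - u * s) / v, -s, -u / v, ?_⟩
        rw [map_div₀, map_div₀, map_neg, map_neg, map_sub, map_one, map_mul]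
        field_simp
        linear_combination he
      rw [hv] at he
      rw [map_zero, zero_mul, add_zero] at he
      exact hend s u he

lemma p7_ncard_prod' {γ δ : Type*} [Fintype γ] [Fintype δ] (s : Set γ) (t : Set δ) :
    (s ×ˢ t).ncard = s.ncard * t.ncard := by
  classical
  rw [Set.ncard_eq_toFinset_card', Set.ncard_eq_toFinset_card', Set.ncard_eq_toFinset_card',
    Set.toFinset_prod, Finset.card_product]

lemma p7_count (i : F →+* K) {q : ℕ} (hq : Fintype.card F = q) {α β : K}
    (hα : α ∉ Set.range i) (hβ : β ∉ Set.range i)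
    {A' B' : Set K} (hA' : A' = {x | ∃ s t : F, x = i s + i t * α})
    (hB' : B' = {x | ∃ s t : F, x = i s + i t * β}) :
    {x : K | x ≠ 0 ∧ x⁻¹ ∈ A' ∧ x ∈ B'}.ncard
      = (1 + {s : F | (β + i s)⁻¹ ∈ A'}.ncard) * (q - 1) := by
  classical
  set Sol := {s : F | (β + i s)⁻¹ ∈ A'} with hSol
  have hrange : Set.range i ⊆ A' := by
    rintro _ ⟨s, rfl⟩
    rw [hA']
    exact ⟨s, 0, by simp⟩
  have hsmulA : ∀ t : F, ∀ x ∈ A', i t * x ∈ A' := by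
    intro t x hx
    rw [hA'] at hx ⊢
    obtain ⟨u, v, rfl⟩ := hx
    exact ⟨t * u, t * v, by rw [map_mul, map_mul]; ring⟩
  have hβ0 : ∀ s : F, β + i s ≠ 0 := by
    intro s h
    exact hβ ⟨-s, by rw [map_neg]; linear_combination -h⟩
  set U : Set K := Set.range i \ {0} with hU
  set T : Set K := (fun p : F × F => i p.1 * (β + i p.2)) '' (({0}ᶜ : Set F) ×ˢ Sol) with hT
  have hSeq : {x : K | x ≠ 0 ∧ x⁻¹ ∈ A' ∧ x ∈ B'} = U ∪ T := by
    ext x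
    simp only [Set.mem_setOf_eq, Set.mem_union, hU, hT, Set.mem_diff, Set.mem_image,
      Set.mem_prod, Set.mem_compl_iff, Set.mem_singleton_iff, Set.mem_range, Prod.exists]
    constructor
    · rintro ⟨hx0, hxi, hxB⟩
      rw [hB'] at hxB
      obtain ⟨s, t, rfl⟩ := hxB
      rcases eq_or_ne t 0 with rfl | ht
      · left
        exact ⟨⟨s, by simp⟩, hx0⟩
      · right
        have hit : i t ≠ 0 := fun h => ht (i.injective (by simpa using h))
        have hxe : i t * (β + i (s / t)) = i s + i t * β := by
          rw [map_div₀]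
          field_simp
          ring
        refine ⟨t, s / t, ⟨ht, ?_⟩, hxe⟩
        show (β + i (s / t))⁻¹ ∈ A'
        have hinv : (β + i (s / t))⁻¹ = i t * (i s + i t * β)⁻¹ := by
          rw [← hxe, mul_inv, ← mul_assoc, mul_inv_cancel₀ hit, one_mul]
        rw [hinv]
        exact hsmulA t _ hxi
    · rintro (⟨⟨s, rfl⟩, hx0⟩ | ⟨t, s, ⟨ht, hs⟩, rfl⟩)
      · refine ⟨hx0, ?_, ?_⟩
        · rw [← map_inv₀]
          exact hrange ⟨s⁻¹, rfl⟩
        · rw [hB']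
          exact ⟨s, 0, by simp⟩
      · have hit : i t ≠ 0 := fun h => ht (i.injective (by simpa using h))
        refine ⟨mul_ne_zero hit (hβ0 s), ?_, ?_⟩
        · rw [mul_inv, ← map_inv₀]
          exact hsmulA t⁻¹ _ hs
        · rw [hB']
          exact ⟨t * s, t, by rw [map_mul]; ring⟩
  have hUfin : U.Finite := (Set.finite_range i).subset Set.diff_subset
  have hTfin : T.Finite := (Set.toFinite _).image _
  have hdisj : Disjoint U T := by
    rw [Set.disjoint_left]
    rintro x ⟨⟨u, rfl⟩, hx0⟩ ⟨⟨t, s⟩, ⟨ht, _⟩, hx⟩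
    have ht' : t ≠ 0 := ht
    have hit : i t ≠ 0 := fun h => ht' (i.injective (by simpa using h))
    apply hβ
    refine ⟨u / t - s, ?_⟩
    rw [map_sub, map_div₀, sub_eq_iff_eq_add, div_eq_iff hit] at *
    linear_combination -hx
  have hTcard : T.ncard = (q - 1) * Sol.ncard := by
    rw [hT, Set.ncard_image_of_injOn, p7_ncard_prod']
    · congr 1
      rw [show ({0}ᶜ : Set F) = Set.univ \ {0} from (Set.compl_eq_univ_diff _),
        Set.ncard_diff_singleton_of_mem (Set.mem_univ 0), Set.ncard_univ,
        Nat.card_eq_fintype_card, hq]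
    · rintro ⟨t, s⟩ ⟨ht, _⟩ ⟨t', s'⟩ ⟨ht', _⟩ h
      have ht0 : t ≠ 0 := ht
      have ht0' : t' ≠ 0 := ht'
      simp only at h
      have key : i (t - t') * β + i (t * s - t' * s') = 0 := by
        rw [map_sub, map_sub, map_mul, map_mul]
        linear_combination h
      have htt : t = t' := by
        by_contra hne
        have hitt : i (t - t') ≠ 0 :=
          fun h' => (sub_ne_zero.mpr hne) (i.injective (by simpa using h'))
        apply hβ
        have hitt' : i t - i t' ≠ 0 := by rw [← map_sub]; exact hitt
        refine ⟨(t' * s' - t * s) / (t - t'), ?_⟩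
        rw [map_div₀, map_sub, map_sub, map_mul, map_mul, div_eq_iff hitt']
        rw [map_sub, map_sub, map_mul, map_mul] at key
        linear_combination -key
      subst htt
      have hss : s = s' := by
        have : i t * (i s - i s') = 0 := by
          rw [map_sub, map_sub, map_mul, map_mul] at key
          linear_combination key
        have hit : i t ≠ 0 := fun h' => ht0 (i.injective (by simpa using h'))
        have := (mul_eq_zero.mp this).resolve_left hit
        have := sub_eq_zero.mp this
        exact i.injective this
      rw [hss]
  have hUcard : U.ncard = q - 1 := by
    rw [hU, Set.ncard_diff_singleton_of_mem (show (0:K) ∈ Set.range i from ⟨0, map_zero i⟩),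
      ← Nat.card_coe_set_eq, Nat.card_range_of_injective i.injective,
      Nat.card_eq_fintype_card, hq]
  rw [hSeq, Set.ncard_union_eq hdisj hUfin hTfin, hUcard, hTcard]
  ring

end P7Aux

/-- For two-dimensional `F_q`-subspaces `A`, `B` of the algebraic closure,
`|A⁻¹ ∩ B|/(q-1) ∈ {0, 1, 2, q+1}`, and `|A⁻¹ ∩ B| = q^2 - 1` holds exactly when `A` is a
one-dimensional `F_{q^2}`-subspace and `B = A⁻¹ ∪ {0}`. -/
theorem stmt7 (F : Type*) [Field F] [Fintype F]
    (K : Type*) [Field K] [Algebra F K] [IsAlgClosure F K]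
    (q : ℕ) (hq : Fintype.card F = q)
    (A B : Submodule F K)
    (hA : Nat.card A = q ^ 2) (hB : Nat.card B = q ^ 2) :
    Nat.card ((fun x => x⁻¹) '' ((A : Set K) \ {0}) ∩ (B : Set K) : Set K)
        ∈ ({0, q - 1, 2 * (q - 1), q ^ 2 - 1} : Set ℕ) ∧
    (Nat.card ((fun x => x⁻¹) '' ((A : Set K) \ {0}) ∩ (B : Set K) : Set K) = q ^ 2 - 1 ↔
      ((∀ γ : K, γ ^ q ^ 2 = γ → ∀ x ∈ (A : Set K), γ * x ∈ (A : Set K)) ∧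
       (B : Set K) = (fun x => x⁻¹) '' ((A : Set K) \ {0}) ∪ {0})) := by
  classical
  have hq2 : 2 ≤ q := hq ▸ Fintype.one_lt_card
  obtain ⟨ha1, ha2, ha3, ha0⟩ := p7_arith hq2
  have hq0 : q ≠ 0 := by omega
  have hAcard' : Nat.card ↥(A : Set K) = q ^ 2 := hA
  have hBcard' : Nat.card ↥(B : Set K) = q ^ 2 := hB
  have hAfin : (A : Set K).Finite := by
    rw [← Set.finite_coe_iff]
    exact (Nat.card_ne_zero.mp (by rw [hAcard']; exact pow_ne_zero 2 hq0)).2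
  have hBfin : (B : Set K).Finite := by
    rw [← Set.finite_coe_iff]
    exact (Nat.card_ne_zero.mp (by rw [hBcard']; exact pow_ne_zero 2 hq0)).2
  have hAn : (A : Set K).ncard = q ^ 2 := by
    rw [← Nat.card_coe_set_eq]; exact hAcard'
  have hBn : (B : Set K).ncard = q ^ 2 := by
    rw [← Nat.card_coe_set_eq]; exact hBcard'
  set S : Set K := (fun x => x⁻¹) '' ((A : Set K) \ {0}) ∩ (B : Set K) with hS
  have hSdesc : S = {x : K | x ≠ 0 ∧ x⁻¹ ∈ (A : Set K) ∧ x ∈ (B : Set K)} := by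
    ext x
    simp only [hS, Set.mem_inter_iff, Set.mem_image, Set.mem_diff, Set.mem_singleton_iff,
      Set.mem_setOf_eq]
    constructor
    · rintro ⟨⟨a, ⟨haA, ha0'⟩, rfl⟩, hxB⟩
      exact ⟨inv_ne_zero ha0', by rwa [inv_inv], hxB⟩
    · rintro ⟨hx0, hxA, hxB⟩
      exact ⟨⟨x⁻¹, ⟨hxA, inv_ne_zero hx0⟩, inv_inv x⟩, hxB⟩
  have hkey : (B : Set K) = (fun x : K => x⁻¹) '' ((A : Set K) \ {0}) ∪ {0} →
      S.ncard = q ^ 2 - 1 := by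
    intro hc
    have himg : (fun x : K => x⁻¹) '' ((A : Set K) \ {0}) ⊆ (B : Set K) := by
      rw [hc]; exact Set.subset_union_left
    have hSeq2 : S = (fun x : K => x⁻¹) '' ((A : Set K) \ {0}) := by
      rw [hS]; exact Set.inter_eq_left.mpr himg
    rw [hSeq2, Set.ncard_image_of_injective _ inv_injective,
      Set.ncard_diff_singleton_of_mem (Submodule.zero_mem A), hAn]
  rw [Nat.card_coe_set_eq]
  rcases Set.eq_empty_or_nonempty S with hSe | ⟨x₁, hx₁S⟩
  · rw [hSe, Set.ncard_empty]
    refine ⟨by simp, fun h => absurd h ha0, fun hrhs => ?_⟩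
    have hcon := hkey hrhs.2
    rw [hSe, Set.ncard_empty] at hcon
    exact absurd hcon ha0
  · obtain ⟨hx₀, hxA, hxB⟩ : x₁ ≠ 0 ∧ x₁⁻¹ ∈ (A : Set K) ∧ x₁ ∈ (B : Set K) := by
      rw [hSdesc] at hx₁S; exact hx₁S
    set A' : Set K := (fun y => x₁ * y) '' (A : Set K) with hA'def
    set B' : Set K := (fun y => x₁⁻¹ * y) '' (B : Set K) with hB'def
    have hx₀' : x₁⁻¹ ≠ 0 := inv_ne_zero hx₀
    have hA'1 : (1 : K) ∈ A' := ⟨x₁⁻¹, hxA, mul_inv_cancel₀ hx₀⟩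
    have hB'1 : (1 : K) ∈ B' := ⟨x₁, hxB, inv_mul_cancel₀ hx₀⟩
    have hA'fin : A'.Finite := hAfin.image _
    have hB'fin : B'.Finite := hBfin.image _
    have hA'card : A'.ncard = q ^ 2 := by
      rw [hA'def, Set.ncard_image_of_injective _ (mul_right_injective₀ hx₀), hAn]
    have hB'card : B'.ncard = q ^ 2 := by
      rw [hB'def, Set.ncard_image_of_injective _ (mul_right_injective₀ hx₀'), hBn]
    have hA'add : ∀ x ∈ A', ∀ y ∈ A', x + y ∈ A' := by
      rintro _ ⟨a, ha, rfl⟩ _ ⟨b, hb, rfl⟩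
      exact ⟨a + b, A.add_mem ha hb, by ring⟩
    have hB'add : ∀ x ∈ B', ∀ y ∈ B', x + y ∈ B' := by
      rintro _ ⟨a, ha, rfl⟩ _ ⟨b, hb, rfl⟩
      exact ⟨a + b, B.add_mem ha hb, by ring⟩
    have hA'smul : ∀ t : F, ∀ x ∈ A', algebraMap F K t * x ∈ A' := by
      rintro t _ ⟨a, ha, rfl⟩
      have h1 : t • a ∈ A := A.smul_mem t ha
      rw [Algebra.smul_def] at h1
      exact ⟨algebraMap F K t * a, h1, by ring⟩
    have hB'smul : ∀ t : F, ∀ x ∈ B', algebraMap F K t * x ∈ B' := by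
      rintro t _ ⟨b, hb, rfl⟩
      have h1 : t • b ∈ B := B.smul_mem t hb
      rw [Algebra.smul_def] at h1
      exact ⟨algebraMap F K t * b, h1, by ring⟩
    obtain ⟨α, hαr, hA'eq⟩ := p7_param (algebraMap F K) hq A' hA'fin hA'card hA'1 hA'add hA'smul
    obtain ⟨β, hβr, hB'eq⟩ := p7_param (algebraMap F K) hq B' hB'fin hB'card hB'1 hB'add hB'smul
    have hSimg : S = (fun y => x₁ * y) '' {x : K | x ≠ 0 ∧ x⁻¹ ∈ A' ∧ x ∈ B'} := by
      rw [hSdesc]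
      ext z
      simp only [Set.mem_image, Set.mem_setOf_eq]
      constructor
      · rintro ⟨hz0, hzA, hzB⟩
        refine ⟨x₁⁻¹ * z, ⟨mul_ne_zero hx₀' hz0, ?_, ⟨z, hzB, rfl⟩⟩, ?_⟩
        · rw [mul_inv, inv_inv]
          exact ⟨z⁻¹, hzA, rfl⟩
        · rw [← mul_assoc, mul_inv_cancel₀ hx₀, one_mul]
      · rintro ⟨y, ⟨hy0, hyA, hyB⟩, rfl⟩
        refine ⟨mul_ne_zero hx₀ hy0, ?_, ?_⟩
        · obtain ⟨a, ha, hay⟩ := hyA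
          have he : (x₁ * y)⁻¹ = a := by
            rw [mul_inv, ← hay, ← mul_assoc, inv_mul_cancel₀ hx₀, one_mul]
          rw [he]; exact ha
        · obtain ⟨b, hb, hby⟩ := hyB
          have he : x₁ * y = b := by
            rw [← hby, ← mul_assoc, mul_inv_cancel₀ hx₀, one_mul]
          rw [he]; exact hb
    have hScount : S.ncard
        = (1 + {s : F | (β + algebraMap F K s)⁻¹ ∈ A'}.ncard) * (q - 1) := by
      rw [hSimg, Set.ncard_image_of_injective _ (mul_right_injective₀ hx₀)]
      exact p7_count (algebraMap F K) hq hαr hβr hA'eq hB'eq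
    rcases p7_sol_tri (algebraMap F K) hαr hβr hA'eq (β := β)
      with h0 | ⟨d, hd⟩ | ⟨huniv, hβA', hα2⟩
    · -- Sol empty : |S| = q - 1
      have hc : S.ncard = q - 1 := by
        rw [hScount, h0, Set.ncard_empty]; ring
      rw [hc]
      refine ⟨by simp, fun h => absurd h ha1, fun hrhs => ?_⟩
      · have hcon := hkey hrhs.2
        rw [hc] at hcon
        exact absurd hcon ha1
    · -- Sol singleton : |S| = 2 * (q - 1)
      have hc : S.ncard = 2 * (q - 1) := by
        rw [hScount, hd, Set.ncard_singleton]
      rw [hc]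
      refine ⟨by simp, fun h => absurd h ha2, fun hrhs => ?_⟩
      · have hcon := hkey hrhs.2
        rw [hc] at hcon
        exact absurd hcon ha2
    · -- Sol = univ : field case
      have hSoln : {s : F | (β + algebraMap F K s)⁻¹ ∈ A'}.ncard = q := by
        rw [huniv, Set.ncard_univ, Nat.card_eq_fintype_card, hq]
      have hc : S.ncard = q ^ 2 - 1 := by
        rw [hScount, hSoln, ha3]
      have hA'mul : ∀ x ∈ A', ∀ y ∈ A', x * y ∈ A' := by
        intro x hx y hy
        rw [hA'eq] at hx hy hα2 ⊢
        obtain ⟨s, t, rfl⟩ := hx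
        obtain ⟨s', t', rfl⟩ := hy
        obtain ⟨p, r, hpr⟩ := hα2
        exact ⟨s * s' + t * t' * p, s * t' + t * s' + t * t' * r, by
          simp only [map_add, map_mul]
          linear_combination (algebraMap F K t * algebraMap F K t') * hpr⟩
      have hA'0 : (0 : K) ∈ A' := ⟨0, Submodule.zero_mem A, mul_zero x₁⟩
      have hA'inv : ∀ z ∈ A', z ≠ 0 → z⁻¹ ∈ A' :=
        fun z hz h0 => p7_inv_mem hA'fin hA'1 hA'mul hz h0
      have hA'pow : ∀ z ∈ A', z ^ q ^ 2 = z :=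
        fun z hz => p7_pow hA'fin hA'1 hA'0 hA'mul hA'card hz
      have hq2sq : 2 ≤ q ^ 2 := by nlinarith
      obtain ⟨hfinR, hcardR⟩ := p7_roots (K := K) hq2sq
      have hroots : A' = {x : K | x ^ q ^ 2 = x} :=
        Set.eq_of_subset_of_ncard_le (fun z hz => hA'pow z hz)
          (by rw [hA'card]; exact hcardR) hfinR
      have hrange' : ∀ s : F, algebraMap F K s ∈ A' := fun s => by
        simpa using hA'smul s 1 hA'1
      have hB'A : B' = A' := by
        refine Set.eq_of_subset_of_ncard_le ?_ (by rw [hA'card, hB'card]) hA'fin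
        rw [hB'eq]
        rintro x ⟨s, t, rfl⟩
        exact hA'add _ (hrange' s) _ (hA'smul t β hβA')
      rw [hc]
      refine ⟨by simp, iff_of_true rfl ⟨?_, ?_⟩⟩
      · -- A is closed under multiplication by F_{q^2}
        intro γ hγ x hx
        have hγA : γ ∈ A' := by rw [hroots]; exact hγ
        have hx1 : x₁ * x ∈ A' := ⟨x, hx, rfl⟩
        have hmemA : γ * (x₁ * x) ∈ A' := hA'mul _ hγA _ hx1
        obtain ⟨a, ha, hae⟩ := hmemA
        have hae' : x₁ * a = γ * (x₁ * x) := hae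
        have haeq : a = γ * x := by
          apply mul_left_cancel₀ hx₀
          rw [hae']; ring
        rw [← haeq]; exact ha
      · -- B = A⁻¹ ∪ {0}
        have hBimg : (B : Set K) = (fun y => x₁ * y) '' A' := by
          rw [← hB'A, hB'def, Set.image_image]
          have hfun : ∀ b : K, x₁ * (x₁⁻¹ * b) = b := fun b => by
            rw [← mul_assoc, mul_inv_cancel₀ hx₀, one_mul]
          simp only [hfun, Set.image_id']
        rw [hBimg]
        ext z
        simp only [Set.mem_image, Set.mem_union, Set.mem_singleton_iff, Set.mem_diff]
        constructor
        · rintro ⟨w, hw, rfl⟩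
          rcases eq_or_ne w 0 with rfl | hw0
          · right; exact mul_zero x₁
          · left
            have hwinv : w⁻¹ ∈ A' := hA'inv w hw hw0
            obtain ⟨a, ha, hae⟩ := hwinv
            have hae' : x₁ * a = w⁻¹ := hae
            have ha0 : a ≠ 0 := by
              rintro rfl
              rw [mul_zero] at hae'
              exact (inv_ne_zero hw0) hae'.symm
            refine ⟨a, ⟨ha, ha0⟩, ?_⟩
            have haeq : a = (x₁ * w)⁻¹ := by
              apply mul_left_cancel₀ hx₀
              rw [hae', mul_inv, ← mul_assoc, mul_inv_cancel₀ hx₀, one_mul]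
            rw [haeq, inv_inv]
        · rintro (⟨a, ⟨haA, ha0⟩, rfl⟩ | rfl)
          · refine ⟨(x₁ * a)⁻¹, hA'inv _ ⟨a, haA, rfl⟩ (mul_ne_zero hx₀ ha0), ?_⟩
            rw [mul_inv, ← mul_assoc, mul_inv_cancel₀ hx₀, one_mul]
          · exact ⟨0, hA'0, mul_zero x₁⟩
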